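/- Let π ∈ (0,1]^n be a normalized possibility distribution, σ a sorting permutation, π̃_r := π_{σ(r)} (convention π̃_{n+1} := 0), A_r := {σ(1),…,σ(r)}, ġ_r := (π̃_r − π̃_{r+1})/r, and ṗ the antipignistic probability vector ṗ_{σ(r)} := Σ_{j=r}^n (π̃_j − π̃_{j+1})/j. Suppose the gap parameters (δ̲_r, δ̄_r)_{r=1}^{n−1} satisfy: δ̲_r = δ̄_r = 0 whenever π̃_r = π̃_{r+1}, and 0 < δ̲_r ≤ ġ_r ≤ δ̄_r < 1 whenever π̃_r > π̃_{r+1}. Then ṗ belongs to F^box ∩ ℝ^n_{++}, where F^box := {p ∈ Δ_n : Σ_{k∈A_r} p_k ≥ 1 − π̃_{r+1} and δ̲_r ≤ p_{σ(r)} − p_{σ(r+1)} ≤ δ̄_r for all r = 1,…,n−1}. In particular F^box is nonempty. -/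

import Mathlib

open Finset

/-- The admissible set `F^box` induced by a possibility distribution `π` on `Fin n`,
a sorting permutation `σ` and gap parameters `δlo, δhi` (0-based sorted positions):
probability vectors satisfying the dominance constraints
`∑_{i < r} p(σ i) ≥ 1 − π(σ r)` for `1 ≤ r ≤ n−1` and the shape constraints
`δlo r ≤ p(σ r) − p(σ (r+1)) ≤ δhi r` for `r + 1 < n`. -/
def Fbox (n : ℕ) (π : Fin n → ℝ) (σ : Equiv.Perm (Fin n)) (δlo δhi : ℕ → ℝ) :
    Set (Fin n → ℝ) :=
  {p | (∀ i, 0 ≤ p i) ∧ (∑ i, p i = 1) ∧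
    (∀ r : Fin n, 1 ≤ (r : ℕ) →
      1 - π (σ r) ≤ ∑ i ∈ univ.filter (fun i : Fin n => (i : ℕ) < (r : ℕ)), p (σ i)) ∧
    (∀ (r : ℕ) (hr : r + 1 < n),
      δlo r ≤ p (σ ⟨r, Nat.lt_of_succ_lt hr⟩) - p (σ ⟨r + 1, hr⟩) ∧
      p (σ ⟨r, Nat.lt_of_succ_lt hr⟩) - p (σ ⟨r + 1, hr⟩) ≤ δhi r)}

/-- With `π`, `σ`, sorted values `tpi` and the antipignistic vector
`ṗ` as in Statement 5, and gap parameters satisfying `δlo r = δhi r = 0` whenever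
`tpi r = tpi (r+1)` and `0 < δlo r ≤ ġ_r ≤ δhi r < 1` (where
`ġ_r = (tpi r − tpi (r+1))/(r+1)`) whenever `tpi r > tpi (r+1)`, the antipignistic
vector `ṗ` belongs to `F^box ∩ ℝ^n_{++}`; in particular `F^box` is nonempty. -/
theorem stmt_8 (n : ℕ) (π : Fin n → ℝ)
    (hπpos : ∀ k, 0 < π k) (hπle : ∀ k, π k ≤ 1) (hπnorm : ∃ k, π k = 1)
    (σ : Equiv.Perm (Fin n))
    (hσ : ∀ r s : Fin n, r ≤ s → π (σ s) ≤ π (σ r))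
    (tpi : ℕ → ℝ)
    (htpi : ∀ r : Fin n, tpi (r : ℕ) = π (σ r)) (htpin : tpi n = 0)
    (pdot : Fin n → ℝ)
    (hpdot : ∀ r : Fin n,
        pdot (σ r) = ∑ j ∈ Finset.Ico (r : ℕ) n, (tpi j - tpi (j + 1)) / ((j : ℝ) + 1))
    (δlo δhi : ℕ → ℝ)
    (hgap : ∀ r, r + 1 < n →
      (tpi r = tpi (r + 1) → δlo r = 0 ∧ δhi r = 0) ∧
      (tpi (r + 1) < tpi r →
        0 < δlo r ∧ δlo r ≤ (tpi r - tpi (r + 1)) / ((r : ℝ) + 1) ∧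
        (tpi r - tpi (r + 1)) / ((r : ℝ) + 1) ≤ δhi r ∧ δhi r < 1)) :
    pdot ∈ Fbox n π σ δlo δhi ∧ (∀ i, 0 < pdot i) ∧
      (Fbox n π σ δlo δhi).Nonempty := by
  classical
  obtain ⟨k0, hk0⟩ := hπnorm
  have hn : 0 < n := k0.pos
  set g : ℕ → ℝ := fun j => (tpi j - tpi (j + 1)) / ((j : ℝ) + 1) with hgdef
  have htpival : ∀ (j : ℕ) (h : j < n), tpi j = π (σ ⟨j, h⟩) := by
    intro j h; simpa using htpi ⟨j, h⟩
  have hmono : ∀ j, j + 1 ≤ n → tpi (j + 1) ≤ tpi j := by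
    intro j hj
    rcases lt_or_eq_of_le hj with h | h
    · rw [htpival j (by omega), htpival (j + 1) h]
      exact hσ ⟨j, by omega⟩ ⟨j + 1, h⟩ (by simp [Fin.le_def])
    · rw [h, htpin, htpival j (by omega)]
      exact (hπpos _).le
  have hgnn : ∀ j, j + 1 ≤ n → 0 ≤ g j := by
    intro j hj
    have := hmono j hj
    have hd : (0:ℝ) < (j : ℝ) + 1 := by positivity
    exact div_nonneg (by linarith) hd.le
  have hwt : ∀ j : ℕ, ((j : ℝ) + 1) * g j = tpi j - tpi (j + 1) := by
    intro j
    have hd : ((j : ℝ) + 1) ≠ 0 := by positivity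
    show ((j : ℝ) + 1) * ((tpi j - tpi (j + 1)) / ((j : ℝ) + 1)) = tpi j - tpi (j + 1)
    field_simp
  have htele' : ∀ a b, a ≤ b → ∑ j ∈ Finset.Ico a b, (tpi j - tpi (j + 1)) = tpi a - tpi b := by
    intro a b hab
    induction b, hab using Nat.le_induction with
    | base => simp
    | succ b hab ih => rw [Finset.sum_Ico_succ_top hab, ih]; ring
  have htele : ∀ a, a ≤ n → ∑ j ∈ Finset.Ico a n, (tpi j - tpi (j + 1)) = tpi a - tpi n :=
    fun a ha => htele' a n ha
  have hrow : ∀ r : Fin n, pdot (σ r) = ∑ j ∈ Finset.Ico (r : ℕ) n, g j := hpdot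
  -- the partial tail sums
  have hS : ∀ a, a ≤ n →
      ∑ i ∈ Finset.Ico a n, (∑ j ∈ Finset.Ico i n, g j)
        = ∑ j ∈ Finset.Ico a n, ((Finset.Ico a (j + 1)).card : ℝ) * g j := by
    intro a ha
    rw [Finset.sum_Ico_Ico_comm]
    refine Finset.sum_congr rfl fun j _ => ?_
    rw [Finset.sum_const, nsmul_eq_mul]
  have hSle : ∀ a, a ≤ n → ∑ i ∈ Finset.Ico a n, (∑ j ∈ Finset.Ico i n, g j) ≤ tpi a := by
    intro a ha
    rw [hS a ha]
    calc ∑ j ∈ Finset.Ico a n, ((Finset.Ico a (j + 1)).card : ℝ) * g j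
        ≤ ∑ j ∈ Finset.Ico a n, (tpi j - tpi (j + 1)) := by
          refine Finset.sum_le_sum fun j hj => ?_
          rw [← hwt j]
          have hjn : j + 1 ≤ n := (Finset.mem_Ico.mp hj).2
          have hcard : ((Finset.Ico a (j + 1)).card : ℝ) ≤ (j : ℝ) + 1 := by
            rw [Nat.card_Ico]
            exact_mod_cast Nat.sub_le (j + 1) a
          exact mul_le_mul_of_nonneg_right hcard (hgnn j hjn)
      _ = tpi a - tpi n := htele a ha
      _ ≤ tpi a := by rw [htpin]; simp
  have htpi0 : tpi 0 = 1 := by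
    rw [htpival 0 hn]
    refine le_antisymm (hπle _) ?_
    rw [← hk0]
    have : σ (σ.symm k0) = k0 := σ.apply_symm_apply k0
    rw [← this]
    exact hσ ⟨0, hn⟩ (σ.symm k0) (by simp [Fin.le_def])
  have hSeq0 : ∑ i ∈ Finset.range n, (∑ j ∈ Finset.Ico i n, g j) = 1 := by
    rw [Finset.range_eq_Ico, hS 0 (Nat.zero_le n)]
    have : ∀ j ∈ Finset.Ico 0 n, ((Finset.Ico 0 (j + 1)).card : ℝ) * g j
        = tpi j - tpi (j + 1) := by
      intro j _
      rw [Nat.card_Ico, Nat.sub_zero, ← hwt j]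
      push_cast; ring
    rw [Finset.sum_congr rfl this, htele 0 (Nat.zero_le n), htpin, htpi0]
    ring
  have hsum1 : ∑ i, pdot i = 1 := by
    rw [← Equiv.sum_comp σ pdot]
    calc ∑ i : Fin n, pdot (σ i) = ∑ i : Fin n, ∑ j ∈ Finset.Ico ((i : Fin n) : ℕ) n, g j :=
          Finset.sum_congr rfl fun i _ => hrow i
      _ = ∑ i ∈ Finset.range n, ∑ j ∈ Finset.Ico i n, g j :=
          Fin.sum_univ_eq_sum_range (fun i => ∑ j ∈ Finset.Ico i n, g j) n
      _ = 1 := hSeq0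
  have hposσ : ∀ r : Fin n, 0 < pdot (σ r) := by
    intro r
    rw [hrow r]
    refine Finset.sum_pos' (fun j hj => hgnn j (Finset.mem_Ico.mp hj).2) ?_
    refine ⟨n - 1, Finset.mem_Ico.mpr ⟨by omega, by omega⟩, ?_⟩
    have h1 : n - 1 + 1 = n := by omega
    have hp : 0 < tpi (n - 1) := by rw [htpival (n - 1) (by omega)]; exact hπpos _
    have : g (n - 1) = tpi (n - 1) / ((↑(n - 1) : ℝ) + 1) := by
      rw [hgdef]; simp [h1, htpin]
    rw [this]
    positivity
  have hpos : ∀ i, 0 < pdot i := by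
    intro i
    have := hposσ (σ.symm i)
    simpa using this
  -- dominance
  have hdom : ∀ r : Fin n, 1 ≤ (r : ℕ) →
      1 - π (σ r) ≤ ∑ i ∈ univ.filter (fun i : Fin n => (i : ℕ) < (r : ℕ)), pdot (σ i) := by
    intro r hr
    have hbridge : ∑ i ∈ univ.filter (fun i : Fin n => (i : ℕ) < (r : ℕ)), pdot (σ i)
        = ∑ j ∈ Finset.range (r : ℕ), ∑ t ∈ Finset.Ico j n, g t := by
      calc ∑ i ∈ univ.filter (fun i : Fin n => (i : ℕ) < (r : ℕ)), pdot (σ i)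
          = ∑ i ∈ univ.filter (fun i : Fin n => (i : ℕ) < (r : ℕ)),
              ∑ t ∈ Finset.Ico ((i : Fin n) : ℕ) n, g t :=
            Finset.sum_congr rfl fun i _ => hrow i
        _ = ∑ i : Fin n, if ((i : Fin n) : ℕ) < (r : ℕ) then ∑ t ∈ Finset.Ico ((i : Fin n) : ℕ) n, g t else 0 :=
            Finset.sum_filter _ _
        _ = ∑ j ∈ Finset.range n, if j < (r : ℕ) then ∑ t ∈ Finset.Ico j n, g t else 0 :=
            Fin.sum_univ_eq_sum_range
              (fun j => if j < (r : ℕ) then ∑ t ∈ Finset.Ico j n, g t else 0) n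
        _ = ∑ j ∈ Finset.filter (fun j => j < (r : ℕ)) (Finset.range n), ∑ t ∈ Finset.Ico j n, g t :=
            (Finset.sum_filter _ _).symm
        _ = ∑ j ∈ Finset.range (r : ℕ), ∑ t ∈ Finset.Ico j n, g t := by
            congr 1
            ext j
            simp only [Finset.mem_filter, Finset.mem_range]
            have := r.isLt
            omega
    rw [hbridge, ← htpival (r : ℕ) r.isLt]
    have hsplit := Finset.sum_range_add_sum_Ico (fun j => ∑ t ∈ Finset.Ico j n, g t)
      (le_of_lt r.isLt)
    have htail := hSle (r : ℕ) (le_of_lt r.isLt)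
    have : ∑ j ∈ Finset.range (r : ℕ), ∑ t ∈ Finset.Ico j n, g t
        = 1 - ∑ i ∈ Finset.Ico (r : ℕ) n, ∑ t ∈ Finset.Ico i n, g t := by
      rw [← hSeq0, ← hsplit]; ring
    rw [this]
    linarith
  -- gap constraints
  have hgapc : ∀ (r : ℕ) (hr : r + 1 < n),
      δlo r ≤ pdot (σ ⟨r, Nat.lt_of_succ_lt hr⟩) - pdot (σ ⟨r + 1, hr⟩) ∧
      pdot (σ ⟨r, Nat.lt_of_succ_lt hr⟩) - pdot (σ ⟨r + 1, hr⟩) ≤ δhi r := by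
    intro r hr
    have hdiff : pdot (σ ⟨r, Nat.lt_of_succ_lt hr⟩) - pdot (σ ⟨r + 1, hr⟩) = g r := by
      rw [hrow ⟨r, Nat.lt_of_succ_lt hr⟩, hrow ⟨r + 1, hr⟩]
      simp only [Fin.val_mk]
      rw [Finset.sum_eq_sum_Ico_succ_bot (by omega : r < n) g]
      ring
    rw [hdiff]
    rcases lt_or_eq_of_le (hmono r (by omega)) with h | h
    · obtain ⟨h1, h2, h3, _⟩ := (hgap r hr).2 h
      exact ⟨h2, h3⟩
    · obtain ⟨h1, h2⟩ := (hgap r hr).1 h.symm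
      have : g r = 0 := by rw [hgdef]; simp [h]
      rw [this, h1, h2]
      exact ⟨le_refl 0, le_refl 0⟩
  have hmem : pdot ∈ Fbox n π σ δlo δhi :=
    ⟨fun i => (hpos i).le, hsum1, hdom, hgapc⟩
  exact ⟨hmem, hpos, ⟨pdot, hmem⟩⟩
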